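/- arXiv:2003.12423 — 2 statements merged into one kernel-verified Lean document; each statement's English description precedes it below -/
import Mathlib

section
/- Let f : ℝ^d → ℝ be differentiable with L-Lipschitz gradient, and let f_μ(x) = E_{u ~ Uniform(unit ball)}[f(x + μu)]. Then ‖∇f_μ(x) - ∇f(x)‖ ≤ μLd/2 for all x. -/
open MeasureTheory Metric

open InnerProductSpace


noncomputable def phi1 : EuclideanSpace ℝ (Fin 1) ≃ᵐ ℝ :=
  (MeasurableEquiv.toLp 2 (Fin 1 → ℝ)).symm.trans (MeasurableEquiv.funUnique (Fin 1) ℝ)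

lemma phi1_mp : MeasurePreserving phi1 volume volume :=
  (EuclideanSpace.volume_preserving_symm_measurableEquiv_toLp (Fin 1)).trans
    (volume_preserving_funUnique (Fin 1) ℝ)

lemma norm_eq_abs1 (u : EuclideanSpace ℝ (Fin 1)) : ‖u‖ = |u 0| := by
  rw [EuclideanSpace.norm_eq]
  simp [Real.sqrt_sq_eq_abs]

lemma cb_preimage : closedBall (0 : EuclideanSpace ℝ (Fin 1)) 1 = phi1 ⁻¹' (Set.Icc (-1) 1) := by
  ext u
  simp [mem_closedBall_zero_iff, norm_eq_abs1, abs_le, Set.mem_Icc, phi1,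
    MeasurableEquiv.coe_toLp_symm, MeasurableEquiv.funUnique]

lemma int_abs : ∫ t in Set.Icc (-1:ℝ) 1, |t| = 1 := by
  rw [MeasureTheory.integral_Icc_eq_integral_Ioc,
    ← intervalIntegral.integral_of_le (by norm_num : (-1:ℝ) ≤ 1)]
  have h1 : ∫ t in (-1:ℝ)..0, |t| = 1/2 := by
    rw [intervalIntegral.integral_congr (g := fun t => -t) ?_]
    · rw [intervalIntegral.integral_neg, integral_id]; norm_num
    · intro t ht
      rw [Set.uIcc_of_le (by norm_num : (-1:ℝ) ≤ 0)] at ht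
      exact abs_of_nonpos ht.2
  have h2 : ∫ t in (0:ℝ)..1, |t| = 1/2 := by
    rw [intervalIntegral.integral_congr (g := fun t => t) ?_]
    · rw [integral_id]; norm_num
    · intro t ht
      rw [Set.uIcc_of_le (by norm_num : (0:ℝ) ≤ 1)] at ht
      exact abs_of_nonneg ht.1
  rw [← intervalIntegral.integral_add_adjacent_intervals (b := 0) ?_ ?_, h1, h2]
  · norm_num
  · exact (continuous_abs.intervalIntegrable _ _)
  · exact (continuous_abs.intervalIntegrable _ _)

lemma int_norm_ball1 : ∫ u in closedBall (0 : EuclideanSpace ℝ (Fin 1)) 1, ‖u‖ = 1 := by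
  rw [cb_preimage]
  have h := phi1_mp.setIntegral_preimage_emb phi1.measurableEmbedding
    (fun t => |t|) (Set.Icc (-1) 1)
  calc ∫ u in phi1 ⁻¹' (Set.Icc (-1:ℝ) 1), ‖u‖
      = ∫ u in phi1 ⁻¹' (Set.Icc (-1:ℝ) 1), |phi1 u| := by
        refine setIntegral_congr_fun ?_ fun u _ => ?_
        · exact phi1.measurableSet_preimage.2 measurableSet_Icc
        · rw [norm_eq_abs1]; rfl
    _ = ∫ t in Set.Icc (-1:ℝ) 1, |t| := h
    _ = 1 := int_abs

lemma vol_ball1 : (volume (closedBall (0 : EuclideanSpace ℝ (Fin 1)) 1)).toReal = 2 := by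
  rw [cb_preimage, phi1_mp.measure_preimage (measurableSet_Icc.nullMeasurableSet)]
  simp [Real.volume_Icc]
  norm_num

lemma avg_norm_le (d : ℕ) (hd : 0 < d) :
    ((volume (closedBall (0 : EuclideanSpace ℝ (Fin d)) 1)).toReal)⁻¹
      * ∫ u in closedBall (0 : EuclideanSpace ℝ (Fin d)) 1, ‖u‖ ≤ (d : ℝ) / 2 := by
  have hv : 0 < (volume (closedBall (0 : EuclideanSpace ℝ (Fin d)) 1)).toReal :=
    ENNReal.toReal_pos (measure_closedBall_pos volume 0 one_pos).ne' measure_closedBall_lt_top.ne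
  rcases eq_or_lt_of_le (show 1 ≤ d from hd) with hd1 | hd2
  · have hd1' : d = 1 := hd1.symm
    subst hd1'
    rw [int_norm_ball1, vol_ball1]
    norm_num
  · haveI : IsFiniteMeasure
        ((volume : Measure (EuclideanSpace ℝ (Fin d))).restrict (closedBall 0 1)) :=
      ⟨by rw [Measure.restrict_apply_univ]; exact measure_closedBall_lt_top⟩
    have hmono : ∫ u in closedBall (0 : EuclideanSpace ℝ (Fin d)) 1, ‖u‖
        ≤ ∫ _u in closedBall (0 : EuclideanSpace ℝ (Fin d)) 1, (1:ℝ) := by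
      refine setIntegral_mono_on ?_ (integrable_const _) measurableSet_closedBall ?_
      · exact continuous_norm.continuousOn.integrableOn_compact (isCompact_closedBall 0 1)
      · exact fun u hu => mem_closedBall_zero_iff.1 hu
    rw [setIntegral_const, smul_eq_mul, mul_one] at hmono
    have h1 : ((volume (closedBall (0 : EuclideanSpace ℝ (Fin d)) 1)).toReal)⁻¹
        * ∫ u in closedBall (0 : EuclideanSpace ℝ (Fin d)) 1, ‖u‖ ≤ 1 := by
      calc ((volume (closedBall (0 : EuclideanSpace ℝ (Fin d)) 1)).toReal)⁻¹
          * ∫ u in closedBall (0 : EuclideanSpace ℝ (Fin d)) 1, ‖u‖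
          ≤ ((volume (closedBall (0 : EuclideanSpace ℝ (Fin d)) 1)).toReal)⁻¹
            * (volume (closedBall (0 : EuclideanSpace ℝ (Fin d)) 1)).toReal :=
            mul_le_mul_of_nonneg_left hmono (inv_nonneg.2 hv.le)
        _ = 1 := inv_mul_cancel₀ hv.ne'
    have : (2:ℝ) ≤ d := by exact_mod_cast hd2
    linarith

set_option maxHeartbeats 1000000 in
theorem smoothing_gradient_approx (d : ℕ) (f : EuclideanSpace ℝ (Fin d) → ℝ) (L μ : ℝ)
    (hμ : 0 < μ)
    (hdiff : Differentiable ℝ f)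
    (hlip : ∀ x y, ‖gradient f x - gradient f y‖ ≤ L * ‖x - y‖) :
    ∀ x : EuclideanSpace ℝ (Fin d),
      ‖gradient (fun z => ⨍ u in closedBall (0 : EuclideanSpace ℝ (Fin d)) 1, f (z + μ • u)) x
          - gradient f x‖ ≤ μ * L * d / 2 := by
  intro x
  rcases Nat.eq_zero_or_pos d with hd0 | hd
  · subst hd0
    have h0 : gradient (fun z => ⨍ u in closedBall (0 : EuclideanSpace ℝ (Fin 0)) 1,
        f (z + μ • u)) x = gradient f x := Subsingleton.elim _ _
    rw [h0, sub_self, norm_zero]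
    norm_num
  -- main case
  haveI : IsFiniteMeasure
      ((volume : Measure (EuclideanSpace ℝ (Fin d))).restrict (closedBall 0 1)) :=
    ⟨by rw [Measure.restrict_apply_univ]; exact measure_closedBall_lt_top⟩
  have hL : 0 ≤ L := by
    have h := hlip (EuclideanSpace.single ⟨0, hd⟩ 1) 0
    have h1 : ‖EuclideanSpace.single (⟨0, hd⟩ : Fin d) (1:ℝ) - 0‖ = 1 := by
      simp [EuclideanSpace.norm_single]
    nlinarith [norm_nonneg (gradient f (EuclideanSpace.single (⟨0, hd⟩ : Fin d) (1:ℝ)) -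
      gradient f 0)]
  have hlipf : ∀ a b : EuclideanSpace ℝ (Fin d), ‖fderiv ℝ f a - fderiv ℝ f b‖ ≤ L * ‖a - b‖ := by
    intro a b
    have h := hlip a b
    rwa [gradient, gradient, ← map_sub,
      (toDual ℝ (EuclideanSpace ℝ (Fin d))).symm.norm_map] at h
  have hcf : Continuous (fderiv ℝ f) := by
    refine (LipschitzWith.of_dist_le_mul (K := L.toNNReal) fun a b => ?_).continuous
    rw [dist_eq_norm, dist_eq_norm, Real.coe_toNNReal L hL]
    exact hlipf a b
  have hcont : ∀ z : EuclideanSpace ℝ (Fin d),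
      Continuous fun u : EuclideanSpace ℝ (Fin d) => f (z + μ • u) :=
    fun z => hdiff.continuous.comp (continuous_const.add (continuous_id.const_smul μ))
  have key : HasFDerivAt (fun z => ∫ u in closedBall (0 : EuclideanSpace ℝ (Fin d)) 1,
        f (z + μ • u))
      (∫ u in closedBall (0 : EuclideanSpace ℝ (Fin d)) 1, fderiv ℝ f (x + μ • u)) x := by
    apply hasFDerivAt_integral_of_dominated_of_fderiv_le
      (F' := fun (z u : EuclideanSpace ℝ (Fin d)) => fderiv ℝ f (z + μ • u)) (ball_mem_nhds x one_pos)
      (bound := fun _ => ‖fderiv ℝ f x‖ + L * (1 + μ))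
    · exact Filter.Eventually.of_forall fun z => (hcont z).aestronglyMeasurable
    · exact (hcont x).continuousOn.integrableOn_compact (isCompact_closedBall 0 1)
    · exact (hcf.comp (continuous_const.add (continuous_id.const_smul μ))).aestronglyMeasurable
    · refine ((ae_restrict_mem measurableSet_closedBall).mono fun u hu => ?_)
      intro z hz
      have h1 : ‖fderiv ℝ f (z + μ • u)‖
          ≤ ‖fderiv ℝ f x‖ + ‖fderiv ℝ f (z + μ • u) - fderiv ℝ f x‖ := by
        have := norm_sub_norm_le (fderiv ℝ f (z + μ • u)) (fderiv ℝ f x); linarith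
      have h2 : ‖z + μ • u - x‖ ≤ 1 + μ := by
        have h4 : ‖z + μ • u - x‖ ≤ ‖z - x‖ + ‖μ • u‖ := by
          have h5 : z + μ • u - x = (z - x) + μ • u := by abel
          rw [h5]; exact norm_add_le _ _
        have hu1 : ‖u‖ ≤ 1 := mem_closedBall_zero_iff.1 hu
        have hz1 : ‖z - x‖ ≤ 1 := le_of_lt (mem_ball_iff_norm.1 hz)
        rw [norm_smul, Real.norm_eq_abs, abs_of_pos hμ] at h4
        nlinarith
      have h3 := hlipf (z + μ • u) x
      nlinarith
    · exact integrable_const _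
    · refine Filter.Eventually.of_forall fun u => fun z hz => ?_
      have h1 : HasFDerivAt (fun w : EuclideanSpace ℝ (Fin d) => w + μ • u)
          (ContinuousLinearMap.id ℝ (EuclideanSpace ℝ (Fin d))) z :=
        (hasFDerivAt_id z).add_const _
      have h2 := ((hdiff (z + μ • u)).hasFDerivAt).comp z h1
      simpa using (show HasFDerivAt (fun w => f (w + μ • u)) _ z from h2)
  set c : ℝ := ((volume (closedBall (0 : EuclideanSpace ℝ (Fin d)) 1)).toReal)⁻¹ with hc
  have hv : 0 < (volume (closedBall (0 : EuclideanSpace ℝ (Fin d)) 1)).toReal :=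
    ENNReal.toReal_pos (measure_closedBall_pos volume 0 one_pos).ne' measure_closedBall_lt_top.ne
  have hc0 : 0 ≤ c := inv_nonneg.2 hv.le
  have havg : (fun z => ⨍ u in closedBall (0 : EuclideanSpace ℝ (Fin d)) 1, f (z + μ • u))
      = fun z => c • ∫ u in closedBall (0 : EuclideanSpace ℝ (Fin d)) 1, f (z + μ • u) :=
    funext fun z => by rw [setAverage_eq]; rfl
  have key2 : HasFDerivAt
      (fun z => ⨍ u in closedBall (0 : EuclideanSpace ℝ (Fin d)) 1, f (z + μ • u))
      (c • ∫ u in closedBall (0 : EuclideanSpace ℝ (Fin d)) 1, fderiv ℝ f (x + μ • u)) x := by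
    rw [havg]; exact key.const_smul c
  have hint1 : IntegrableOn (fun u : EuclideanSpace ℝ (Fin d) => fderiv ℝ f (x + μ • u))
      (closedBall 0 1) volume :=
    ((hcf.comp (continuous_const.add (continuous_id.const_smul μ)))).continuousOn.integrableOn_compact
      (isCompact_closedBall 0 1)
  have hgrad : gradient (fun z => ⨍ u in closedBall (0 : EuclideanSpace ℝ (Fin d)) 1,
      f (z + μ • u)) x = (toDual ℝ (EuclideanSpace ℝ (Fin d))).symm
      (c • ∫ u in closedBall (0 : EuclideanSpace ℝ (Fin d)) 1, fderiv ℝ f (x + μ • u)) := by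
    rw [gradient, key2.fderiv]
  have hnorm : ‖gradient (fun z => ⨍ u in closedBall (0 : EuclideanSpace ℝ (Fin d)) 1,
      f (z + μ • u)) x - gradient f x‖
      = ‖(c • ∫ u in closedBall (0 : EuclideanSpace ℝ (Fin d)) 1, fderiv ℝ f (x + μ • u))
        - fderiv ℝ f x‖ := by
    rw [hgrad, gradient, ← map_sub, (toDual ℝ (EuclideanSpace ℝ (Fin d))).symm.norm_map]
  rw [hnorm]
  have hsub : (c • ∫ u in closedBall (0 : EuclideanSpace ℝ (Fin d)) 1, fderiv ℝ f (x + μ • u))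
      - fderiv ℝ f x
      = c • ∫ u in closedBall (0 : EuclideanSpace ℝ (Fin d)) 1,
          (fderiv ℝ f (x + μ • u) - fderiv ℝ f x) := by
    rw [integral_sub hint1 (integrable_const _), smul_sub]
    congr 1
    rw [setIntegral_const, measureReal_def, smul_smul, hc, inv_mul_cancel₀ hv.ne', one_smul]
  rw [hsub]
  have hbound : ‖∫ u in closedBall (0 : EuclideanSpace ℝ (Fin d)) 1,
      (fderiv ℝ f (x + μ • u) - fderiv ℝ f x)‖
      ≤ ∫ u in closedBall (0 : EuclideanSpace ℝ (Fin d)) 1, (μ * L) * ‖u‖ := by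
    refine norm_integral_le_of_norm_le ?_ ?_
    · exact (Integrable.const_mul
        (continuous_norm.continuousOn.integrableOn_compact (isCompact_closedBall 0 1)) _)
    · refine Filter.Eventually.of_forall fun u => ?_
      have h := hlipf (x + μ • u) x
      have h2 : x + μ • u - x = μ • u := by abel
      rw [h2, norm_smul, Real.norm_eq_abs, abs_of_pos hμ] at h
      calc ‖fderiv ℝ f (x + μ • u) - fderiv ℝ f x‖ ≤ L * (μ * ‖u‖) := h
        _ = (μ * L) * ‖u‖ := by ring
  have hfinal : c * ∫ u in closedBall (0 : EuclideanSpace ℝ (Fin d)) 1, ‖u‖ ≤ (d : ℝ) / 2 :=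
    avg_norm_le d hd
  have hμL : 0 ≤ μ * L := mul_nonneg hμ.le hL
  calc ‖c • ∫ u in closedBall (0 : EuclideanSpace ℝ (Fin d)) 1,
        (fderiv ℝ f (x + μ • u) - fderiv ℝ f x)‖
      = c * ‖∫ u in closedBall (0 : EuclideanSpace ℝ (Fin d)) 1,
        (fderiv ℝ f (x + μ • u) - fderiv ℝ f x)‖ := by
        rw [norm_smul, Real.norm_eq_abs, abs_of_nonneg hc0]
    _ ≤ c * ∫ u in closedBall (0 : EuclideanSpace ℝ (Fin d)) 1, (μ * L) * ‖u‖ :=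
        mul_le_mul_of_nonneg_left hbound hc0
    _ = (μ * L) * (c * ∫ u in closedBall (0 : EuclideanSpace ℝ (Fin d)) 1, ‖u‖) := by
        rw [integral_const_mul]; ring
    _ ≤ (μ * L) * ((d : ℝ) / 2) := mul_le_mul_of_nonneg_left hfinal hμL
    _ = μ * L * d / 2 := by ring
end

section
/- Let F : ℝ^d → ℝ be differentiable with L-Lipschitz gradient, let v be uniformly distributed on the unit sphere in ℝ^d, and define the zeroth-order gradient estimate G_μ = (d/μ)[F(x + μv) - F(x)]v for μ > 0. Then E_v[‖G_μ‖²] ≤ 2d‖∇F(x)‖² + μ²L²d²/2. -/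
open MeasureTheory Metric

/-- The uniform probability measure on the closed unit ball of `ℝ^d`. -/
noncomputable def ballUniform (d : ℕ) : Measure (EuclideanSpace ℝ (Fin d)) :=
  (volume (closedBall (0 : EuclideanSpace ℝ (Fin d)) 1))⁻¹ •
    volume.restrict (closedBall (0 : EuclideanSpace ℝ (Fin d)) 1)

/-- The uniform probability measure on the unit sphere of `ℝ^d`, obtained by
radially projecting the uniform measure on the unit ball. -/
noncomputable def sphereUniform (d : ℕ) : Measure (EuclideanSpace ℝ (Fin d)) :=
  Measure.map (fun u => ‖u‖⁻¹ • u) (ballUniform d)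

section Meas

variable {d : ℕ}

local notation "E" => EuclideanSpace ℝ (Fin d)

lemma proj_measurable : Measurable (fun u : E => ‖u‖⁻¹ • u) :=
  (measurable_norm.inv).smul measurable_id

lemma ballUniform_map (e : E ≃ₗᵢ[ℝ] E) :
    Measure.map e (ballUniform d) = ballUniform d := by
  unfold ballUniform
  rw [Measure.map_smul]
  congr 1
  have hB : (e : E → E) ⁻¹' closedBall (0 : E) 1 = closedBall (0 : E) 1 := by
    ext u
    simp [mem_closedBall, e.norm_map]
  calc Measure.map e (volume.restrict (closedBall (0 : E) 1))
      = Measure.map e (volume.restrict ((e : E → E) ⁻¹' closedBall (0 : E) 1)) := by rw [hB]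
    _ = (Measure.map e volume).restrict (closedBall (0 : E) 1) :=
        (Measure.restrict_map e.continuous.measurable measurableSet_closedBall).symm
    _ = volume.restrict (closedBall (0 : E) 1) := by rw [e.measurePreserving.map_eq]

lemma sphereUniform_map (e : E ≃ₗᵢ[ℝ] E) :
    Measure.map e (sphereUniform d) = sphereUniform d := by
  unfold sphereUniform
  rw [Measure.map_map e.continuous.measurable proj_measurable]
  have hcomm : (e : E → E) ∘ (fun u : E => ‖u‖⁻¹ • u) =
      (fun u : E => ‖u‖⁻¹ • u) ∘ (e : E → E) := by
    funext u
    simp [Function.comp, e.norm_map, _root_.map_smul]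
  rw [hcomm, ← Measure.map_map proj_measurable e.continuous.measurable, ballUniform_map]

instance ballUniform_prob [NeZero d] : IsProbabilityMeasure (ballUniform d) := by
  constructor
  unfold ballUniform
  have h0 : volume (closedBall (0 : E) 1) ≠ 0 :=
    (measure_closedBall_pos volume (0 : E) one_pos).ne'
  have h1 : volume (closedBall (0 : E) 1) ≠ ⊤ := measure_closedBall_lt_top.ne
  rw [Measure.smul_apply, Measure.restrict_apply MeasurableSet.univ, Set.univ_inter,
    smul_eq_mul, ENNReal.inv_mul_cancel h0 h1]

instance sphereUniform_prob [NeZero d] : IsProbabilityMeasure (sphereUniform d) := by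
  constructor
  unfold sphereUniform
  rw [Measure.map_apply proj_measurable MeasurableSet.univ, Set.preimage_univ]
  exact measure_univ

lemma sphereUniform_norm_ae [NeZero d] : ∀ᵐ v ∂(sphereUniform d), ‖v‖ = 1 := by
  have : Nontrivial E := by
    have : 0 < d := Nat.pos_of_ne_zero (NeZero.ne d)
    infer_instance
  rw [ae_iff]
  unfold sphereUniform
  rw [Measure.map_apply proj_measurable]
  · have hsub : (fun u : E => ‖u‖⁻¹ • u) ⁻¹' {v | ¬ ‖v‖ = 1} ⊆ {(0 : E)} := by
      intro u hu
      simp only [Set.mem_preimage, Set.mem_setOf_eq] at hu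
      by_contra h0
      apply hu
      have hn : ‖u‖ ≠ 0 := by simpa using h0
      rw [norm_smul, norm_inv, norm_norm]
      field_simp
    refine le_antisymm (le_trans (measure_mono hsub) ?_) zero_le
    unfold ballUniform
    simp
  · exact (isClosed_eq continuous_norm continuous_const).measurableSet.compl

lemma integral_comp_isometry [NeZero d] (e : E ≃ₗᵢ[ℝ] E) (f : E → ℝ) (hf : Continuous f) :
    ∫ v, f v ∂(sphereUniform d) = ∫ v, f (e v) ∂(sphereUniform d) := by
  conv_lhs => rw [← sphereUniform_map e]
  rw [integral_map e.continuous.measurable.aemeasurable hf.aestronglyMeasurable]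

lemma coord_abs_le (v : E) (i : Fin d) : |v i| ≤ ‖v‖ := by
  rw [EuclideanSpace.norm_eq, ← Real.sqrt_sq_eq_abs]
  apply Real.sqrt_le_sqrt
  have h : (v i) ^ 2 = ‖v i‖ ^ 2 := by rw [Real.norm_eq_abs, sq_abs]
  rw [h]
  exact Finset.single_le_sum (f := fun j => ‖v j‖ ^ 2) (fun j _ => sq_nonneg _)
    (Finset.mem_univ i)

lemma coord_continuous (i : Fin d) : Continuous (fun v : E => v i) := by
  have := (EuclideanSpace.proj (𝕜 := ℝ) i).continuous
  simpa using this

lemma sphere_integrable [NeZero d] (f : E → ℝ) (hf : Continuous f) (C : ℝ)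
    (hb : ∀ v : E, ‖v‖ = 1 → |f v| ≤ C) : Integrable f (sphereUniform d) := by
  refine Integrable.mono' (integrable_const C) hf.aestronglyMeasurable ?_
  filter_upwards [sphereUniform_norm_ae] with v hv
  simpa [Real.norm_eq_abs] using hb v hv

lemma coord_mul_integrable [NeZero d] (i j : Fin d) :
    Integrable (fun v : E => v i * v j) (sphereUniform d) := by
  refine sphere_integrable _ ((coord_continuous i).mul (coord_continuous j)) 1 ?_
  intro v hv
  rw [abs_mul]
  calc |v i| * |v j| ≤ ‖v‖ * ‖v‖ :=
        mul_le_mul (coord_abs_le v i) (coord_abs_le v j) (abs_nonneg _) (norm_nonneg _)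
    _ = 1 := by rw [hv]; ring

lemma sphere_moment [NeZero d] (i j : Fin d) :
    ∫ v, v i * v j ∂(sphereUniform d) = if i = j then (1 : ℝ) / d else 0 := by
  by_cases hij : i = j
  · subst hij
    rw [if_pos rfl]
    -- all diagonal moments are equal
    have hswap : ∀ k : Fin d, ∫ v, v k * v k ∂(sphereUniform d) =
        ∫ v, v i * v i ∂(sphereUniform d) := by
      intro k
      set e : E ≃ₗᵢ[ℝ] E := LinearIsometryEquiv.piLpCongrLeft 2 ℝ ℝ (Equiv.swap k i)
      have happ : ∀ (v : E), e v i = v k := by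
        intro v
        simp only [e, LinearIsometryEquiv.piLpCongrLeft_apply, Equiv.piCongrLeft'_apply,
          Equiv.symm_swap]
        exact congrArg v (Equiv.swap_apply_right k i)
      have h := integral_comp_isometry e (fun v => v i * v i)
        ((coord_continuous i).mul (coord_continuous i))
      rw [h]
      refine integral_congr_ae (Filter.Eventually.of_forall fun v => ?_)
      simp only
      rw [happ]
    have hsum : ∑ k : Fin d, ∫ v, v k * v k ∂(sphereUniform d) = 1 := by
      rw [← integral_finset_sum _ (fun k _ => coord_mul_integrable k k)]
      have hae : ∀ᵐ v ∂(sphereUniform d), (∑ k : Fin d, v k * v k) = (1 : ℝ) := by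
        filter_upwards [sphereUniform_norm_ae] with v hv
        rw [EuclideanSpace.norm_eq] at hv
        have hnn : (0:ℝ) ≤ ∑ k : Fin d, ‖v k‖ ^ 2 :=
          Finset.sum_nonneg fun k _ => sq_nonneg _
        have hS : ∑ k : Fin d, ‖v k‖ ^ 2 = 1 := by
          have := Real.sq_sqrt hnn
          rw [hv] at this
          linarith
        rw [← hS]
        congr 1
        funext k
        rw [Real.norm_eq_abs, sq_abs, sq]
      rw [integral_congr_ae hae, integral_const]
      simp
    have hall : ∑ k : Fin d, ∫ v, v k * v k ∂(sphereUniform d) =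
        (d : ℝ) * ∫ v, v i * v i ∂(sphereUniform d) := by
      rw [Finset.sum_congr rfl (fun k _ => hswap k), Finset.sum_const, Finset.card_univ]
      simp [nsmul_eq_mul]
    rw [hall] at hsum
    have hd : (d : ℝ) ≠ 0 := Nat.cast_ne_zero.mpr (NeZero.ne d)
    rw [eq_div_iff hd]
    linarith
  · rw [if_neg hij]
    classical
    set e : E ≃ₗᵢ[ℝ] E := LinearIsometryEquiv.piLpCongrRight 2
      (fun k : Fin d => if k = i then LinearIsometryEquiv.neg ℝ else
        LinearIsometryEquiv.refl ℝ ℝ)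
    have happ : ∀ (v : E) (k : Fin d), e v k = if k = i then -(v k) else v k := by
      intro v k
      by_cases hk : k = i
      · subst hk
        simp [e, LinearIsometryEquiv.piLpCongrRight_apply]
      · simp [e, LinearIsometryEquiv.piLpCongrRight_apply, hk]
    have h := integral_comp_isometry e (fun v => v i * v j)
      ((coord_continuous i).mul (coord_continuous j))
    have h2 : ∫ v, (e v) i * (e v) j ∂(sphereUniform d) =
        - ∫ v, v i * v j ∂(sphereUniform d) := by
      rw [← integral_neg]
      refine integral_congr_ae (Filter.Eventually.of_forall fun v => ?_)
      simp only
      rw [happ, happ, if_pos rfl, if_neg (fun hk => hij hk.symm)]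
      ring
    rw [h2] at h
    linarith

lemma inner_sq_integral [NeZero d] (g : E) :
    ∫ v, (inner ℝ g v : ℝ) ^ 2 ∂(sphereUniform d) = ‖g‖ ^ 2 / d := by
  have hexp : ∀ v : E, (inner ℝ g v : ℝ) ^ 2 =
      ∑ i : Fin d, ∑ j : Fin d, (g i * g j) * (v i * v j) := by
    intro v
    have h1 : (inner ℝ g v : ℝ) = ∑ i : Fin d, g i * v i := by
      simp [PiLp.inner_apply, RCLike.inner_apply, mul_comm]
    rw [h1, sq, Finset.sum_mul_sum]
    congr 1
    funext i
    congr 1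
    funext j
    ring
  rw [integral_congr_ae (Filter.Eventually.of_forall hexp)]
  rw [integral_finset_sum _ (fun i _ => integrable_finset_sum _
    (fun j _ => (coord_mul_integrable i j).const_mul _))]
  have hstep : ∀ i : Fin d, ∫ v, (∑ j : Fin d, (g i * g j) * (v i * v j))
      ∂(sphereUniform d) = g i * g i * (1 / d) := by
    intro i
    rw [integral_finset_sum _ (fun j _ => (coord_mul_integrable i j).const_mul _)]
    have : ∀ j : Fin d, ∫ v, (g i * g j) * (v i * v j) ∂(sphereUniform d) =
        (g i * g j) * (if i = j then (1 : ℝ) / d else 0) := by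
      intro j
      rw [MeasureTheory.integral_const_mul, sphere_moment]
    rw [Finset.sum_congr rfl (fun j _ => this j)]
    rw [Finset.sum_eq_single i]
    · simp
    · intro j _ hj
      rw [if_neg (fun h => hj h.symm), mul_zero]
    · intro h
      exact absurd (Finset.mem_univ i) h
  rw [Finset.sum_congr rfl (fun i _ => hstep i)]
  rw [← Finset.sum_mul]
  have hnorm : ∑ i : Fin d, g i * g i = ‖g‖ ^ 2 := by
    rw [EuclideanSpace.norm_eq, Real.sq_sqrt (Finset.sum_nonneg fun i _ => sq_nonneg _)]
    congr 1
    funext i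
    rw [Real.norm_eq_abs, sq_abs, sq]
  rw [hnorm]
  ring

end Meas


local notation "⟪" x ", " y "⟫" => @inner ℝ _ _ x y

lemma smooth_taylor {E : Type*} [NormedAddCommGroup E] [InnerProductSpace ℝ E] [CompleteSpace E]
    (F : E → ℝ) (L : ℝ) (hdiff : Differentiable ℝ F)
    (hlip : ∀ a b, ‖gradient F a - gradient F b‖ ≤ L * ‖a - b‖) (p q : E) :
    |F q - F p - ⟪gradient F p, q - p⟫| ≤ L / 2 * ‖q - p‖ ^ 2 := by
  set w := q - p with hw
  set g := gradient F p with hg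
  have hgradcont : Continuous (gradient F) := by
    refine (LipschitzWith.of_dist_le_mul (K := Real.toNNReal L) ?_).continuous
    intro a b
    rw [dist_eq_norm, dist_eq_norm, Real.coe_toNNReal']
    exact (hlip a b).trans (mul_le_mul_of_nonneg_right (le_max_left _ _) (norm_nonneg _))
  set φ : ℝ → ℝ := fun t => F (p + t • w) - t * ⟪g, w⟫ with hφ
  set φ' : ℝ → ℝ := fun t => ⟪gradient F (p + t • w) - g, w⟫ with hφ'
  have hγ : ∀ t : ℝ, HasDerivAt (fun t : ℝ => p + t • w) w t := by
    intro t
    simpa using ((hasDerivAt_id t).smul_const w).const_add p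
  have hder : ∀ t : ℝ, HasDerivAt φ (φ' t) t := by
    intro t
    have h1 : HasDerivAt (fun t : ℝ => F (p + t • w)) ⟪gradient F (p + t • w), w⟫ t := by
      have := ((hdiff (p + t • w)).hasGradientAt.hasFDerivAt).comp_hasDerivAt t (hγ t)
      simp [Function.comp_def] at this ⊢
      exact this
    have h2 : HasDerivAt (fun t : ℝ => t * ⟪g, w⟫) ⟪g, w⟫ t := by
      simpa using (hasDerivAt_mul_const (⟪g, w⟫ : ℝ)) 
    simpa [φ, φ', inner_sub_left, Pi.sub_def] using h1.sub h2
  have hline : Continuous (fun t : ℝ => p + t • w) :=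
    continuous_const.add (continuous_id.smul continuous_const)
  have hcont : Continuous φ' :=
    ((hgradcont.comp hline).sub continuous_const).inner continuous_const
  have hftc : ∫ t in (0:ℝ)..1, φ' t = φ 1 - φ 0 :=
    intervalIntegral.integral_eq_sub_of_hasDerivAt (fun t _ => hder t)
      (hcont.intervalIntegrable 0 1)
  have hφ10 : φ 1 - φ 0 = F q - F p - ⟪g, w⟫ := by
    simp [φ, hw]
    ring
  have hbound : ∀ t ∈ Set.Icc (0:ℝ) 1, |φ' t| ≤ L * ‖w‖ ^ 2 * t := by
    intro t ht
    have h1 : |φ' t| ≤ ‖gradient F (p + t • w) - g‖ * ‖w‖ := abs_real_inner_le_norm _ _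
    have h2 : ‖gradient F (p + t • w) - g‖ ≤ L * (t * ‖w‖) := by
      have := hlip (p + t • w) p
      simpa [norm_smul, abs_of_nonneg ht.1] using this
    calc |φ' t| ≤ L * (t * ‖w‖) * ‖w‖ :=
          h1.trans (mul_le_mul_of_nonneg_right h2 (norm_nonneg _))
      _ = L * ‖w‖ ^ 2 * t := by ring
  have habs : |∫ t in (0:ℝ)..1, φ' t| ≤ L / 2 * ‖w‖ ^ 2 := by
    have h := intervalIntegral.norm_integral_le_of_norm_le (μ := volume) (a := 0) (b := 1)
      (f := φ') (g := fun t => L * ‖w‖ ^ 2 * t) zero_le_one ?_ ?_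
    · rw [Real.norm_eq_abs] at h
      have hL0 : 0 ≤ L * ‖w‖ ^ 2 := by
        have h1 := hbound 1 ⟨zero_le_one, le_refl 1⟩
        nlinarith [abs_nonneg (φ' 1)]
      refine h.trans ?_
      rw [intervalIntegral.integral_const_mul, integral_id]
      have : ((1:ℝ) ^ 2 - 0 ^ 2) / 2 = 1 / 2 := by norm_num
      rw [this]
      nlinarith
    · filter_upwards with t ht
      exact hbound t ⟨le_of_lt ht.1, ht.2⟩
    · exact ((continuous_const.mul continuous_id).intervalIntegrable 0 1)
  rw [hftc, hφ10] at habs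
  exact habs


lemma sq_helper (D s L m : ℝ) (h : |D - m * s| ≤ L / 2 * m ^ 2) :
    D ^ 2 ≤ 2 * m ^ 2 * s ^ 2 + L ^ 2 * m ^ 4 / 2 := by
  have h2 := abs_le.mp h
  have hsq : (D - m * s) ^ 2 ≤ (L / 2 * m ^ 2) ^ 2 := sq_le_sq' (by linarith [h2.1]) h2.2
  nlinarith [hsq, sq_nonneg (D - 2 * m * s)]

theorem zeroth_order_second_moment (d : ℕ) (hd : 0 < d)
    (F : EuclideanSpace ℝ (Fin d) → ℝ) (L μ : ℝ) (hμ : 0 < μ)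
    (hdiff : Differentiable ℝ F)
    (hlip : ∀ a b, ‖gradient F a - gradient F b‖ ≤ L * ‖a - b‖)
    (x : EuclideanSpace ℝ (Fin d)) :
    ∫ v, ‖(((d : ℝ) / μ) * (F (x + μ • v) - F x)) • v‖ ^ 2 ∂(sphereUniform d) ≤
      2 * d * ‖gradient F x‖ ^ 2 + μ ^ 2 * L ^ 2 * d ^ 2 / 2 := by
  haveI : NeZero d := ⟨hd.ne'⟩
  set ν := sphereUniform d with hν
  set g := gradient F x with hg
  have hdR : ((d : ℝ)) ≠ 0 := Nat.cast_ne_zero.mpr hd.ne'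
  have hL : 0 ≤ L := by
    obtain ⟨a, b, hab⟩ := exists_pair_ne (EuclideanSpace ℝ (Fin d))
    have h := hlip a b
    have hpos : 0 < ‖a - b‖ := by rwa [norm_pos_iff, sub_ne_zero]
    nlinarith [norm_nonneg (gradient F a - gradient F b)]
  set h : EuclideanSpace ℝ (Fin d) → ℝ :=
    fun v => 2 * (d : ℝ) ^ 2 * (inner ℝ g v : ℝ) ^ 2 + (d : ℝ) ^ 2 * L ^ 2 * μ ^ 2 / 2 with hh
  have hcont_inner : Continuous (fun v : EuclideanSpace ℝ (Fin d) => (inner ℝ g v : ℝ) ^ 2) :=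
    (continuous_const.inner continuous_id).pow 2
  have hint_inner : Integrable (fun v : EuclideanSpace ℝ (Fin d) => (inner ℝ g v : ℝ) ^ 2) ν := by
    refine sphere_integrable _ hcont_inner (‖g‖ ^ 2) ?_
    intro v hv
    have h1 : |(inner ℝ g v : ℝ)| ≤ ‖g‖ * ‖v‖ := abs_real_inner_le_norm g v
    rw [hv, mul_one] at h1
    rw [abs_of_nonneg (sq_nonneg _)]
    calc (inner ℝ g v : ℝ) ^ 2 = |(inner ℝ g v : ℝ)| ^ 2 := (sq_abs _).symm
      _ ≤ ‖g‖ ^ 2 := by nlinarith [abs_nonneg (inner ℝ g v : ℝ)]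
  have hint_h : Integrable h ν := (hint_inner.const_mul _).add (integrable_const _)
  have hmono : ∫ v, ‖(((d : ℝ) / μ) * (F (x + μ • v) - F x)) • v‖ ^ 2 ∂ν ≤ ∫ v, h v ∂ν := by
    refine integral_mono_of_nonneg (Filter.Eventually.of_forall fun v => by positivity) hint_h ?_
    filter_upwards [sphereUniform_norm_ae] with v hv
    have htay := smooth_taylor F L hdiff hlip x (x + μ • v)
    rw [add_sub_cancel_left, real_inner_smul_right] at htay
    have hnv : ‖μ • v‖ ^ 2 = μ ^ 2 := by
      rw [norm_smul, hv, mul_one, Real.norm_eq_abs, sq_abs]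
    rw [hnv] at htay
    have hD := sq_helper (F (x + μ • v) - F x) (inner ℝ g v) L μ htay
    have hlhs : ‖(((d : ℝ) / μ) * (F (x + μ • v) - F x)) • v‖ ^ 2 =
        (d : ℝ) ^ 2 / μ ^ 2 * (F (x + μ • v) - F x) ^ 2 := by
      rw [norm_smul, hv, mul_one, Real.norm_eq_abs, sq_abs]
      field_simp
    have h2 : (d : ℝ) ^ 2 / μ ^ 2 * (F (x + μ • v) - F x) ^ 2 ≤
        (d : ℝ) ^ 2 / μ ^ 2 *
          (2 * μ ^ 2 * (inner ℝ g v : ℝ) ^ 2 + L ^ 2 * μ ^ 4 / 2) :=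
      mul_le_mul_of_nonneg_left hD (by positivity)
    have h3 : (d : ℝ) ^ 2 / μ ^ 2 *
          (2 * μ ^ 2 * (inner ℝ g v : ℝ) ^ 2 + L ^ 2 * μ ^ 4 / 2) =
        2 * (d : ℝ) ^ 2 * (inner ℝ g v : ℝ) ^ 2 + (d : ℝ) ^ 2 * L ^ 2 * μ ^ 2 / 2 := by
      field_simp
    show ‖(((d : ℝ) / μ) * (F (x + μ • v) - F x)) • v‖ ^ 2 ≤ h v
    rw [hlhs, hh]
    simp only
    linarith
  have hIntegral : ∫ v, h v ∂ν =
      2 * (d : ℝ) ^ 2 * (‖g‖ ^ 2 / d) + (d : ℝ) ^ 2 * L ^ 2 * μ ^ 2 / 2 := by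
    rw [hh]
    rw [integral_add (hint_inner.const_mul _) (integrable_const _)]
    rw [MeasureTheory.integral_const_mul, inner_sq_integral, integral_const]
    simp [measure_univ]
  have hfin : 2 * (d : ℝ) ^ 2 * (‖g‖ ^ 2 / d) + (d : ℝ) ^ 2 * L ^ 2 * μ ^ 2 / 2 =
      2 * d * ‖g‖ ^ 2 + μ ^ 2 * L ^ 2 * (d : ℝ) ^ 2 / 2 := by
    field_simp
  calc ∫ v, ‖(((d : ℝ) / μ) * (F (x + μ • v) - F x)) • v‖ ^ 2 ∂ν ≤ ∫ v, h v ∂ν := hmono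
    _ = 2 * d * ‖g‖ ^ 2 + μ ^ 2 * L ^ 2 * (d : ℝ) ^ 2 / 2 := by rw [hIntegral, hfin]
end
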